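/- Let μ > 0 and T > 0, and let a and b be non-negative, non-decreasing real-valued functions on [0,T]. If y : [0,T] → ℝ is integrable and satisfies 0 ≤ y(t) ≤ a(t) + b(t) ∫_0^t ω_μ(t−s) y(s) ds for 0 ≤ t ≤ T, then y(t) ≤ a(t) E_μ(b(t) t^μ) for 0 ≤ t ≤ T. -/

import Mathlib

open MeasureTheory Real Set
open scoped RealInnerProductSpace

/-- `ω_μ(t) = t^{μ-1}/Γ(μ)`. -/
noncomputable def omegaK (μ t : ℝ) : ℝ := t ^ (μ - 1) / Real.Gamma μ

/-- Riemann–Liouville fractional integral of order `μ` of an `H`-valued function,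
with `I^0 φ = φ`. -/
noncomputable def fracInt {H : Type*} [NormedAddCommGroup H] [NormedSpace ℝ H]
    (μ : ℝ) (φ : ℝ → H) (t : ℝ) : H :=
  if μ = 0 then φ t else ∫ s in (0:ℝ)..t, omegaK μ (t - s) • φ s

/-- The Mittag-Leffler function `E_μ(z) = Σ_{n=0}^∞ z^n / Γ(1 + nμ)`. -/
noncomputable def mittagLeffler (μ z : ℝ) : ℝ := ∑' n : ℕ, z ^ n / Real.Gamma (1 + n * μ)

open Filter Topology
open scoped ENNReal

section FracGronwallAux


lemma real_beta_integrable {u v : ℝ} (hu : 0 < u) (hv : 0 < v) :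
    IntervalIntegrable (fun x : ℝ => x ^ (u - 1) * (1 - x) ^ (v - 1)) volume 0 1 := by
  have h := Complex.betaIntegral_convergent (u := (u : ℂ)) (v := (v : ℂ)) (by simpa) (by simpa)
  refine h.mono_fun (Measurable.aestronglyMeasurable (by fun_prop)) ?_
  refine Filter.eventually_of_mem (self_mem_ae_restrict measurableSet_uIoc) fun x hx => ?_
  rw [uIoc_of_le (by norm_num : (0:ℝ) ≤ 1)] at hx
  obtain ⟨hx0, hx1⟩ := hx
  have h1x : (0:ℝ) ≤ 1 - x := by linarith
  have key : ((x : ℂ) ^ ((u:ℂ) - 1) * (1 - (x:ℂ)) ^ ((v:ℂ) - 1))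
      = ((x ^ (u-1) * (1-x) ^ (v-1) : ℝ) : ℂ) := by
    rw [Complex.ofReal_mul, Complex.ofReal_cpow hx0.le, Complex.ofReal_cpow h1x]
    push_cast
    ring
  refine le_of_eq ?_
  show ‖x ^ (u-1) * (1-x) ^ (v-1)‖ = ‖(x:ℂ) ^ ((u:ℂ)-1) * (1-(x:ℂ)) ^ ((v:ℂ)-1)‖
  rw [key]
  simp

lemma real_beta_value {u v : ℝ} (hu : 0 < u) (hv : 0 < v) :
    ∫ x in (0:ℝ)..1, x ^ (u - 1) * (1 - x) ^ (v - 1)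
      = Real.Gamma u * Real.Gamma v / Real.Gamma (u + v) := by
  have h := Complex.Gamma_mul_Gamma_eq_betaIntegral (s := (u : ℂ)) (t := (v : ℂ))
    (by simpa) (by simpa)
  have hβ : Complex.betaIntegral (u : ℂ) (v : ℂ)
      = ((∫ x in (0:ℝ)..1, x ^ (u - 1) * (1 - x) ^ (v - 1) : ℝ) : ℂ) := by
    rw [Complex.betaIntegral, ← intervalIntegral.integral_ofReal]
    refine intervalIntegral.integral_congr fun x hx => ?_
    rw [uIcc_of_le (by norm_num : (0:ℝ) ≤ 1)] at hx
    obtain ⟨hx0, hx1⟩ := hx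
    show (x:ℂ) ^ ((u:ℂ)-1) * (1-(x:ℂ)) ^ ((v:ℂ)-1) = ((x ^ (u-1) * (1-x) ^ (v-1) : ℝ) : ℂ)
    rw [Complex.ofReal_mul, Complex.ofReal_cpow hx0, Complex.ofReal_cpow (by linarith)]
    push_cast
    ring
  rw [hβ, ← Complex.ofReal_add, Complex.Gamma_ofReal, Complex.Gamma_ofReal,
    Complex.Gamma_ofReal, ← Complex.ofReal_mul, ← Complex.ofReal_mul] at h
  have h' := Complex.ofReal_inj.mp h
  have hγ : Real.Gamma (u + v) ≠ 0 := (Real.Gamma_pos_of_pos (by linarith)).ne'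
  field_simp [h']
  rw [h']; ring


section conv
variable {μ ν r s : ℝ}

lemma conv_eqOn (hrs : r < s) :
    EqOn (fun u : ℝ => (s - u) ^ (μ - 1) * (u - r) ^ (ν - 1))
      (fun u : ℝ => (s - r) ^ (μ - 1) * (s - r) ^ (ν - 1) *
        (((u - r)/(s - r)) ^ (ν - 1) * (1 - (u - r)/(s - r)) ^ (μ - 1)))
      (uIcc r s) := by
  intro u hu
  rw [uIcc_of_le hrs.le] at hu
  obtain ⟨h1, h2⟩ := hu
  have hc : (0:ℝ) < s - r := by linarith
  have e1 : (1 : ℝ) - (u - r)/(s - r) = (s - u)/(s - r) := by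
    field_simp
    ring
  simp only [e1]
  rw [Real.div_rpow (by linarith) hc.le, Real.div_rpow (by linarith) hc.le]
  have h3 : (s - r) ^ (μ - 1) ≠ 0 := (Real.rpow_pos_of_pos hc _).ne'
  have h4 : (s - r) ^ (ν - 1) ≠ 0 := (Real.rpow_pos_of_pos hc _).ne'
  field_simp

lemma conv_integrable (hμ : 0 < μ) (hν : 0 < ν) (hrs : r < s) :
    IntervalIntegrable (fun u : ℝ => (s - u) ^ (μ - 1) * (u - r) ^ (ν - 1)) volume r s := by
  have hc : (0:ℝ) < s - r := by linarith
  have h0 : IntervalIntegrable (fun x : ℝ => x ^ (ν - 1) * (1 - x) ^ (μ - 1)) volume 0 1 :=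
    real_beta_integrable hν hμ
  have h1 := h0.comp_mul_right (c := (s - r)⁻¹)
  have h2 := h1.comp_sub_right r
  rw [show (0:ℝ)/(s-r)⁻¹ + r = r by simp, show (1:ℝ)/(s-r)⁻¹ + r = s by field_simp; ring] at h2
  have h2' := h2
  have h3 := (h2'.const_mul ((s - r) ^ (μ - 1) * (s - r) ^ (ν - 1)))
  refine h3.congr ?_
  refine fun u hu => ?_
  have := (conv_eqOn (μ := μ) (ν := ν) hrs (uIoc_subset_uIcc hu)).symm
  simpa [div_eq_mul_inv, mul_assoc] using this

lemma conv_value (hμ : 0 < μ) (hν : 0 < ν) (hrs : r < s) :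
    ∫ u in r..s, (s - u) ^ (μ - 1) * (u - r) ^ (ν - 1)
      = (s - r) ^ (μ + ν - 1) * (Real.Gamma μ * Real.Gamma ν / Real.Gamma (μ + ν)) := by
  have hc : (0:ℝ) < s - r := by linarith
  rw [intervalIntegral.integral_congr (conv_eqOn hrs)]
  rw [intervalIntegral.integral_const_mul]
  have e2 : ∀ x : ℝ, (x - r)/(s - r) = (x - r) * (s-r)⁻¹ := fun x => div_eq_mul_inv _ _
  have hsub : (∫ u in r..s, ((u - r)/(s - r)) ^ (ν - 1) * (1 - (u - r)/(s - r)) ^ (μ - 1))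
      = ∫ v in (0:ℝ)..(s - r), (v/(s - r)) ^ (ν - 1) * (1 - v/(s - r)) ^ (μ - 1) := by
    have := intervalIntegral.integral_comp_sub_right
      (f := fun v : ℝ => (v/(s - r)) ^ (ν - 1) * (1 - v/(s - r)) ^ (μ - 1)) (a := r) (b := s) r
    simpa using this
  rw [hsub]
  have hdiv := intervalIntegral.integral_comp_div
    (f := fun x : ℝ => x ^ (ν - 1) * (1 - x) ^ (μ - 1)) (a := (0:ℝ)) (b := s - r) hc.ne'
  rw [hdiv]
  simp only [zero_div, div_self hc.ne', smul_eq_mul]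
  rw [real_beta_value hν hμ]
  rw [show Real.Gamma (ν + μ) = Real.Gamma (μ + ν) by rw [add_comm]]
  have : (s - r) ^ (μ - 1) * (s - r) ^ (ν - 1) * ((s - r) * _root_.id 1) = (s-r) ^ (μ + ν - 1) := by
    rw [← Real.rpow_add hc, show (μ - 1) + (ν - 1) = μ + ν - 2 by ring]
    rw [show (s - r) * _root_.id 1 = (s - r) ^ (1:ℝ) by simp [Real.rpow_one]]
    rw [← Real.rpow_add hc]
    congr 1
    ring
  simp only [_root_.id] at this
  rw [show (s - r) ^ (μ - 1) * (s - r) ^ (ν - 1) * ((s - r) * (Real.Gamma ν * Real.Gamma μ / Real.Gamma (μ + ν)))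
      = (s - r) ^ (μ - 1) * (s - r) ^ (ν - 1) * ((s - r) * 1) * (Real.Gamma ν * Real.Gamma μ / Real.Gamma (μ + ν)) by ring, this]
  ring
end conv


lemma omegaK_nonneg {μ t : ℝ} (hμ : 0 < μ) (ht : 0 ≤ t) : 0 ≤ omegaK μ t :=
  div_nonneg (Real.rpow_nonneg ht _) (Real.Gamma_pos_of_pos hμ).le

lemma measurable_omegaK (μ : ℝ) : Measurable (omegaK μ) := by
  unfold omegaK; fun_prop

lemma omega_conv_lintegral {μ ν r s : ℝ} (hμ : 0 < μ) (hν : 0 < ν) (hrs : r < s) :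
    ∫⁻ u in Ioo r s, ENNReal.ofReal (omegaK μ (s - u) * omegaK ν (u - r))
      = ENNReal.ofReal (omegaK (μ + ν) (s - r)) := by
  have hΓμ := Real.Gamma_pos_of_pos hμ
  have hΓν := Real.Gamma_pos_of_pos hν
  have hΓμν := Real.Gamma_pos_of_pos (by linarith : 0 < μ + ν)
  have hfeq : (fun u : ℝ => omegaK μ (s - u) * omegaK ν (u - r))
      = fun u : ℝ => ((s - u) ^ (μ - 1) * (u - r) ^ (ν - 1)) * (Real.Gamma μ * Real.Gamma ν)⁻¹ := by
    funext u
    unfold omegaK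
    rw [div_mul_div_comm, div_eq_mul_inv]
  have hint : IntegrableOn (fun u : ℝ => omegaK μ (s - u) * omegaK ν (u - r)) (Ioc r s) := by
    rw [hfeq]
    exact (intervalIntegrable_iff_integrableOn_Ioc_of_le hrs.le).mp
      ((conv_integrable hμ hν hrs).mul_const _)
  have hnn : 0 ≤ᵐ[volume.restrict (Ioc r s)]
      fun u : ℝ => omegaK μ (s - u) * omegaK ν (u - r) := by
    refine (ae_restrict_iff' measurableSet_Ioc).2 (Filter.Eventually.of_forall fun u hu => ?_)
    exact mul_nonneg (omegaK_nonneg hμ (by linarith [hu.2])) (omegaK_nonneg hν (by linarith [hu.1]))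
  rw [Measure.restrict_congr_set Ioo_ae_eq_Ioc,
    ← ofReal_integral_eq_lintegral_ofReal hint hnn]
  congr 1
  rw [← intervalIntegral.integral_of_le hrs.le, hfeq,
    intervalIntegral.integral_mul_const, conv_value hμ hν hrs]
  unfold omegaK
  field_simp

lemma omega_semigroup {Y : ℝ → ℝ≥0∞} (hY : Measurable Y) (hYtop : ∀ x, Y x ≠ ⊤) {μ ν : ℝ} (s : ℝ)
    (hμ : 0 < μ) (hν : 0 < ν) :
    ∫⁻ u in Ioo 0 s, ENNReal.ofReal (omegaK μ (s - u)) *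
        ∫⁻ r in Ioo 0 u, ENNReal.ofReal (omegaK ν (u - r)) * Y r
      = ∫⁻ r in Ioo 0 s, ENNReal.ofReal (omegaK (μ + ν) (s - r)) * Y r := by
  set F : ℝ × ℝ → ℝ≥0∞ := fun p =>
    {q : ℝ × ℝ | 0 < q.2 ∧ q.2 < q.1 ∧ q.1 < s}.indicator
      (fun q => ENNReal.ofReal (omegaK μ (s - q.1)) *
        ENNReal.ofReal (omegaK ν (q.1 - q.2)) * Y q.2) p with hF
  have hSmeas : MeasurableSet {q : ℝ × ℝ | 0 < q.2 ∧ q.2 < q.1 ∧ q.1 < s} := by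
    have h1 : MeasurableSet {q : ℝ × ℝ | 0 < q.2} := measurableSet_lt measurable_const measurable_snd
    have h2 : MeasurableSet {q : ℝ × ℝ | q.2 < q.1} := measurableSet_lt measurable_snd measurable_fst
    have h3 : MeasurableSet {q : ℝ × ℝ | q.1 < s} := measurableSet_lt measurable_fst measurable_const
    have : {q : ℝ × ℝ | 0 < q.2 ∧ q.2 < q.1 ∧ q.1 < s}
        = {q : ℝ × ℝ | 0 < q.2} ∩ ({q : ℝ × ℝ | q.2 < q.1} ∩ {q : ℝ × ℝ | q.1 < s}) := by
      ext q; simp [Set.mem_setOf_eq, and_assoc]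
    rw [this]
    exact h1.inter (h2.inter h3)
  have hFmeas : Measurable F := by
    refine Measurable.indicator ?_ hSmeas
    exact ((((measurable_omegaK μ).comp (measurable_const.sub measurable_fst)).ennreal_ofReal).mul
      (((measurable_omegaK ν).comp (measurable_fst.sub measurable_snd)).ennreal_ofReal)).mul
      (hY.comp measurable_snd)
  have hL : ∫⁻ u in Ioo 0 s, ENNReal.ofReal (omegaK μ (s - u)) *
        ∫⁻ r in Ioo 0 u, ENNReal.ofReal (omegaK ν (u - r)) * Y r
      = ∫⁻ u, ∫⁻ r, F (u, r) := by
    rw [← lintegral_indicator measurableSet_Ioo]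
    refine lintegral_congr fun u => ?_
    by_cases hu : u ∈ Ioo (0:ℝ) s
    · rw [Set.indicator_of_mem hu]
      have : ∀ r, F (u, r) = (Ioo (0:ℝ) u).indicator
          (fun r => ENNReal.ofReal (omegaK μ (s - u)) *
            (ENNReal.ofReal (omegaK ν (u - r)) * Y r)) r := by
        intro r
        by_cases hr : r ∈ Ioo (0:ℝ) u
        · simp only [hF]
          rw [Set.indicator_of_mem hr, Set.indicator_of_mem (show ((u,r) : ℝ × ℝ) ∈
            {q : ℝ × ℝ | 0 < q.2 ∧ q.2 < q.1 ∧ q.1 < s} from ⟨hr.1, hr.2, hu.2⟩)]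
          ring
        · simp only [hF]
          rw [Set.indicator_of_notMem hr, Set.indicator_of_notMem]
          intro hmem
          exact hr ⟨hmem.1, hmem.2.1⟩
      simp only [this]
      rw [lintegral_indicator measurableSet_Ioo,
        lintegral_const_mul' _ _ ENNReal.ofReal_ne_top]
    · have : ∀ r, F (u, r) = 0 := by
        intro r
        simp only [hF]
        beta_reduce
        rw [Set.indicator_of_notMem]
        intro hmem
        exact hu ⟨lt_trans hmem.1 hmem.2.1, hmem.2.2⟩
      rw [Set.indicator_of_notMem hu]
      simp [this]
  have hR : ∫⁻ r, ∫⁻ u, F (u, r)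
      = ∫⁻ r in Ioo 0 s, ENNReal.ofReal (omegaK (μ + ν) (s - r)) * Y r := by
    rw [← lintegral_indicator measurableSet_Ioo]
    refine lintegral_congr fun r => ?_
    by_cases hr : r ∈ Ioo (0:ℝ) s
    · rw [Set.indicator_of_mem hr]
      have : ∀ u, F (u, r) = (Ioo r s).indicator
          (fun u => ENNReal.ofReal (omegaK μ (s - u)) * ENNReal.ofReal (omegaK ν (u - r))) u
            * Y r := by
        intro u
        by_cases hu : u ∈ Ioo r s
        · simp only [hF]
          rw [Set.indicator_of_mem hu, Set.indicator_of_mem (show ((u,r) : ℝ × ℝ) ∈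
            {q : ℝ × ℝ | 0 < q.2 ∧ q.2 < q.1 ∧ q.1 < s} from ⟨hr.1, hu.1, hu.2⟩)]
        · simp only [hF]
          rw [Set.indicator_of_notMem hu, Set.indicator_of_notMem, zero_mul]
          intro hmem
          exact hu ⟨hmem.2.1, hmem.2.2⟩
      simp only [this]
      rw [lintegral_mul_const' _ _ (hYtop r), lintegral_indicator measurableSet_Ioo]
      congr 1
      rw [← omega_conv_lintegral hμ hν hr.2]
      refine setLIntegral_congr_fun measurableSet_Ioo (fun u hu => ?_)
      rw [ENNReal.ofReal_mul (omegaK_nonneg hμ (by linarith [hu.2]))]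
    · have : ∀ u, F (u, r) = 0 := by
        intro u
        simp only [hF]
        beta_reduce
        rw [Set.indicator_of_notMem]
        intro hmem
        exact hr ⟨hmem.1, lt_trans hmem.2.1 hmem.2.2⟩
      rw [Set.indicator_of_notMem hr]
      simp [this]
  rw [hL, ← hR]
  exact lintegral_lintegral_swap hFmeas.aemeasurable


lemma Gamma_convex_lower {θ x : ℝ} (hθ0 : 0 < θ) (hθ1 : θ ≤ 1) (hx : 2 ≤ x) :
    Real.Gamma x * (x + θ - 1) ^ θ ≤ Real.Gamma (x + θ) := by
  have hp1 : (0:ℝ) < x + θ - 1 := by linarith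
  have hp2 : (0:ℝ) < x + θ := by linarith
  have hxpos : (0:ℝ) < x := by linarith
  have hconv := Real.convexOn_log_Gamma.2 (mem_Ioi.mpr hp1) (mem_Ioi.mpr hp2)
    hθ0.le (by linarith : (0:ℝ) ≤ 1 - θ) (by ring)
  have hsmul : θ • (x + θ - 1) + (1 - θ) • (x + θ) = x := by
    simp only [smul_eq_mul]; ring
  rw [hsmul] at hconv
  simp only [Function.comp_apply, smul_eq_mul] at hconv
  -- Γ (x+θ) = (x+θ-1) * Γ (x+θ-1)
  have hrec : Real.Gamma (x + θ) = (x + θ - 1) * Real.Gamma (x + θ - 1) := by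
    have := Real.Gamma_add_one (s := x + θ - 1) hp1.ne'
    rw [show x + θ - 1 + 1 = x + θ by ring] at this
    exact this
  have hG1 : 0 < Real.Gamma (x + θ - 1) := Real.Gamma_pos_of_pos hp1
  have hG2 : 0 < Real.Gamma (x + θ) := Real.Gamma_pos_of_pos hp2
  have hGx : 0 < Real.Gamma x := Real.Gamma_pos_of_pos hxpos
  have hlog : Real.log (Real.Gamma (x + θ - 1))
      = Real.log (Real.Gamma (x + θ)) - Real.log (x + θ - 1) := by
    rw [hrec, Real.log_mul hp1.ne' hG1.ne']
    ring
  rw [hlog] at hconv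
  have hkey : Real.log (Real.Gamma x) + θ * Real.log (x + θ - 1)
      ≤ Real.log (Real.Gamma (x + θ)) := by nlinarith [hconv]
  have hlhs : Real.log (Real.Gamma x * (x + θ - 1) ^ θ)
      = Real.log (Real.Gamma x) + θ * Real.log (x + θ - 1) := by
    rw [Real.log_mul hGx.ne' (Real.rpow_pos_of_pos hp1 θ).ne', Real.log_rpow hp1]
  have := Real.exp_le_exp.mpr (hlhs ▸ hkey)
  rwa [Real.exp_log (by positivity), Real.exp_log hG2] at this

lemma Gamma_ratio_tendsto {μ : ℝ} (hμ : 0 < μ) :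
    Tendsto (fun n : ℕ => Real.Gamma (1 + n * μ) / Real.Gamma (1 + n * μ + μ)) atTop (𝓝 0) := by
  set θ := min μ 1 with hθ
  have hθ0 : 0 < θ := lt_min hμ one_pos
  have hθ1 : θ ≤ 1 := min_le_right _ _
  have hθμ : θ ≤ μ := min_le_left _ _
  have hbound : ∀ n : ℕ, 2 ≤ 1 + (n:ℝ) * μ →
      Real.Gamma (1 + n * μ) / Real.Gamma (1 + n * μ + μ)
        ≤ 1 / ((1 + n * μ) + θ - 1) ^ θ := by
    intro n hn
    set x := 1 + (n:ℝ) * μ with hx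
    have hxpos : (0:ℝ) < x := by linarith
    have h1 : Real.Gamma x * (x + θ - 1) ^ θ ≤ Real.Gamma (x + θ) :=
      Gamma_convex_lower hθ0 hθ1 hn
    have h2 : Real.Gamma (x + θ) ≤ Real.Gamma (x + μ) := by
      rcases eq_or_lt_of_le hθμ with h | h
      · rw [h]
      · exact (Real.Gamma_strictMonoOn_Ici (by simp only [mem_Ici]; linarith)
          (by simp only [mem_Ici]; linarith) (by linarith)).le
    have hGx : 0 < Real.Gamma x := Real.Gamma_pos_of_pos hxpos
    have hGμ : 0 < Real.Gamma (x + μ) := Real.Gamma_pos_of_pos (by linarith)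
    have hpow : 0 < (x + θ - 1) ^ θ := Real.rpow_pos_of_pos (by linarith) _
    rw [div_le_div_iff₀ hGμ (by positivity)]
    calc Real.Gamma x * (x + θ - 1) ^ θ ≤ Real.Gamma (x + θ) := h1
      _ ≤ Real.Gamma (x + μ) := h2
      _ = 1 * Real.Gamma (x + μ) := (one_mul _).symm
  have htop : Tendsto (fun n : ℕ => ((1 + (n:ℝ) * μ) + θ - 1) ^ θ) atTop atTop := by
    refine (tendsto_rpow_atTop hθ0).comp ?_
    have h1 : Tendsto (fun n : ℕ => (n:ℝ) * μ) atTop atTop :=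
      Tendsto.atTop_mul_const hμ tendsto_natCast_atTop_atTop
    have h2 := tendsto_atTop_add_const_right atTop θ h1
    exact h2.congr fun n => by ring
  refine squeeze_zero' ?_ ?_ (htop.inv_tendsto_atTop.congr fun n => (one_div _).symm)
  · exact Filter.Eventually.of_forall fun n =>
      div_nonneg (Real.Gamma_pos_of_pos (by positivity)).le
        (Real.Gamma_pos_of_pos (by positivity)).le
  · have hev : ∀ᶠ n : ℕ in atTop, 2 ≤ 1 + (n:ℝ) * μ := by
      have : Tendsto (fun n : ℕ => 1 + (n:ℝ) * μ) atTop atTop :=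
        tendsto_atTop_add_const_left _ _ (Tendsto.atTop_mul_const hμ tendsto_natCast_atTop_atTop)
      exact this.eventually_ge_atTop 2
    filter_upwards [hev] with n hn
    exact hbound n hn

lemma ml_summable {μ z : ℝ} (hμ : 0 < μ) (hz : 0 ≤ z) :
    Summable (fun n : ℕ => z ^ n / Real.Gamma (1 + n * μ)) := by
  rcases eq_or_lt_of_le hz with h | hzpos
  · refine summable_of_ne_finset_zero (s := {0}) fun n hn => ?_
    have : n ≠ 0 := by simpa using hn
    simp [← h, zero_pow this]
  · have hG : ∀ n : ℕ, (0:ℝ) < Real.Gamma (1 + n * μ) := fun n =>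
      Real.Gamma_pos_of_pos (by positivity)
    refine summable_of_ratio_test_tendsto_lt_one one_pos ?_ ?_
    · exact Filter.Eventually.of_forall fun n =>
        (div_pos (pow_pos hzpos n) (hG n)).ne'
    · have hcong : ∀ n : ℕ, ‖z ^ (n+1) / Real.Gamma (1 + (n+1 : ℕ) * μ)‖
          / ‖z ^ n / Real.Gamma (1 + n * μ)‖
          = z * (Real.Gamma (1 + n * μ) / Real.Gamma (1 + n * μ + μ)) := by
        intro n
        have h1 : (1 + ((n:ℝ)+1) * μ) = 1 + n * μ + μ := by ring
        rw [Real.norm_eq_abs, Real.norm_eq_abs, abs_of_pos (div_pos (pow_pos hzpos _) (hG _)),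
          abs_of_pos (div_pos (pow_pos hzpos _) (hG _))]
        push_cast
        rw [h1]
        have h2 := (hG n).ne'
        have h3 : Real.Gamma (1 + n * μ + μ) ≠ 0 :=
          (Real.Gamma_pos_of_pos (by positivity)).ne'
        field_simp
        ring
      have := (Gamma_ratio_tendsto hμ).const_mul z
      rw [mul_zero] at this
      exact Tendsto.congr (fun n => (hcong n).symm) this


lemma remainder_tendsto {μ t B : ℝ} (hμ : 0 < μ) (ht : 0 < t) (hB : 0 ≤ B) :
    Tendsto (fun n : ℕ => B ^ n * (t ^ ((n:ℝ) * μ - 1) / Real.Gamma ((n:ℝ) * μ)))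
      atTop (𝓝 0) := by
  rcases eq_or_lt_of_le hB with hB0 | hBpos
  · refine Tendsto.congr' ?_ (tendsto_const_nhds : Tendsto (fun _ : ℕ => (0:ℝ)) atTop (𝓝 0))
    filter_upwards [eventually_ge_atTop 1] with n hn
    rw [← hB0, zero_pow (by omega : n ≠ 0), zero_mul]
  · set d : ℕ → ℝ := fun n => (n:ℝ) * (B ^ n * (t ^ ((n:ℝ) * μ) / Real.Gamma (1 + n * μ)))
      with hd
    have hGpos : ∀ n : ℕ, (0:ℝ) < Real.Gamma (1 + n * μ) := fun n =>
      Real.Gamma_pos_of_pos (by positivity)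
    have hdpos : ∀ n : ℕ, 1 ≤ n → 0 < d n := by
      intro n hn
      have : (0:ℝ) < (n:ℝ) := by exact_mod_cast hn
      exact mul_pos this (mul_pos (pow_pos hBpos n)
        (div_pos (Real.rpow_pos_of_pos ht _) (hGpos n)))
    have hsum : Summable d := by
      refine summable_of_ratio_test_tendsto_lt_one one_pos ?_ ?_
      · filter_upwards [eventually_ge_atTop 1] with n hn
        exact (hdpos n hn).ne'
      · have hlim : Tendsto (fun n : ℕ => (1 + 1/(n:ℝ)) *
            ((B * t ^ μ) * (Real.Gamma (1 + n * μ) / Real.Gamma (1 + n * μ + μ))))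
            atTop (𝓝 0) := by
          have h1 : Tendsto (fun n : ℕ => 1 + 1/(n:ℝ)) atTop (𝓝 1) := by
            have := tendsto_one_div_atTop_nhds_zero_nat.const_add (1:ℝ)
            simpa using this
          have h2 := (Gamma_ratio_tendsto hμ).const_mul (B * t ^ μ)
          rw [mul_zero] at h2
          have := h1.mul h2
          simpa using this
        refine Tendsto.congr' ?_ hlim
        filter_upwards [eventually_ge_atTop 1] with n hn
        have hnpos : (0:ℝ) < (n:ℝ) := by exact_mod_cast hn
        rw [Real.norm_eq_abs, Real.norm_eq_abs, abs_of_pos (hdpos (n+1) (by omega)),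
          abs_of_pos (hdpos n hn)]
        simp only [hd]
        push_cast
        rw [show (1 + ((n:ℝ)+1) * μ) = 1 + n * μ + μ by ring,
          show t ^ (((n:ℝ)+1) * μ) = t ^ ((n:ℝ) * μ) * t ^ μ by
            rw [← Real.rpow_add ht]; ring_nf]
        have h2 := (hGpos n).ne'
        have h3 : Real.Gamma (1 + n * μ + μ) ≠ 0 :=
          (Real.Gamma_pos_of_pos (by positivity)).ne'
        have h4 : t ^ ((n:ℝ) * μ) ≠ 0 := (Real.rpow_pos_of_pos ht _).ne'
        have h5 : B ^ n ≠ 0 := (pow_pos hBpos n).ne'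
        field_simp
        ring
    have hd0 := hsum.tendsto_atTop_zero
    have := hd0.const_mul (μ/t)
    rw [mul_zero] at this
    refine Tendsto.congr' ?_ this
    filter_upwards [eventually_ge_atTop 1] with n hn
    have hnpos : (0:ℝ) < (n:ℝ) := by exact_mod_cast hn
    have hnμ : ((n:ℝ) * μ) ≠ 0 := by positivity
    have hrec : Real.Gamma (1 + n * μ) = (n:ℝ) * μ * Real.Gamma ((n:ℝ) * μ) := by
      have := Real.Gamma_add_one hnμ
      rw [add_comm] at this
      exact this
    have hGn : (0:ℝ) < Real.Gamma ((n:ℝ) * μ) := Real.Gamma_pos_of_pos (by positivity)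
    show μ / t * ((n:ℝ) * (B ^ n * (t ^ ((n:ℝ) * μ) / Real.Gamma (1 + n * μ)))) = _
    rw [hrec, Real.rpow_sub ht, Real.rpow_one]
    field_simp


end FracGronwallAux

lemma omegaK_one (x : ℝ) : omegaK 1 x = 1 := by
  unfold omegaK
  simp [Real.Gamma_one]

lemma ml_zero (μ : ℝ) : mittagLeffler μ 0 = 1 := by
  unfold mittagLeffler
  rw [tsum_eq_single 0 (fun n hn => by simp [zero_pow hn])]
  simp [Real.Gamma_one]

/-- fractional Gronwall inequality. -/
theorem stmt_4 (μ T : ℝ) (hμ : 0 < μ) (hT : 0 < T) (a b y : ℝ → ℝ)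
    (ha0 : ∀ t ∈ Icc (0:ℝ) T, 0 ≤ a t) (hamono : MonotoneOn a (Icc (0:ℝ) T))
    (hb0 : ∀ t ∈ Icc (0:ℝ) T, 0 ≤ b t) (hbmono : MonotoneOn b (Icc (0:ℝ) T))
    (hyint : IntegrableOn y (Icc (0:ℝ) T))
    (hy : ∀ t ∈ Icc (0:ℝ) T,
      0 ≤ y t ∧ y t ≤ a t + b t * ∫ s in (0:ℝ)..t, omegaK μ (t - s) * y s) :
    ∀ t ∈ Icc (0:ℝ) T, y t ≤ a t * mittagLeffler μ (b t * t ^ μ) := by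
  intro t htmem
  obtain ⟨ht0, htT⟩ := htmem
  rcases eq_or_lt_of_le ht0 with ht0' | htpos
  · -- t = 0
    obtain ⟨hy0, hy1⟩ := hy t ⟨ht0, htT⟩
    rw [← ht0'] at hy1 ⊢
    rw [intervalIntegral.integral_same, mul_zero, add_zero] at hy1
    rw [Real.zero_rpow hμ.ne', mul_zero, ml_zero, mul_one]
    exact hy1
  -- main case : 0 < t
  have htIcc : t ∈ Icc (0:ℝ) T := ⟨ht0, htT⟩
  have hA : 0 ≤ a t := ha0 t htIcc
  have hB : 0 ≤ b t := hb0 t htIcc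
  have hmeas := hyint.aestronglyMeasurable
  set y' : ℝ → ℝ := hmeas.mk y with hy'def
  have hy'meas : StronglyMeasurable y' := hmeas.stronglyMeasurable_mk
  have hyy' : y =ᵐ[volume.restrict (Icc 0 T)] y' := hmeas.ae_eq_mk
  set Y : ℝ → ℝ≥0∞ := fun r => ENNReal.ofReal (y' r) with hYdef
  have hYmeas : Measurable Y := hy'meas.measurable.ennreal_ofReal
  have hYtop : ∀ x, Y x ≠ ⊤ := fun x => ENNReal.ofReal_ne_top
  -- step inequality
  have hstep : ∀ s, 0 ≤ s → s ≤ t → ENNReal.ofReal (y s) ≤ ENNReal.ofReal (a t)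
      + ENNReal.ofReal (b t) * ∫⁻ r in Ioo 0 s, ENNReal.ofReal (omegaK μ (s - r)) * Y r := by
    intro s hs0 hst
    have hsmem : s ∈ Icc (0:ℝ) T := ⟨hs0, hst.trans htT⟩
    obtain ⟨hys0, hys1⟩ := hy s hsmem
    have has : a s ≤ a t := hamono hsmem htIcc hst
    have hbs : b s ≤ b t := hbmono hsmem htIcc hst
    have hbs0 : 0 ≤ b s := hb0 s hsmem
    have hInn : 0 ≤ ∫ r in (0:ℝ)..s, omegaK μ (s - r) * y r := by
      refine intervalIntegral.integral_nonneg hs0 fun r hr => ?_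
      exact mul_nonneg (omegaK_nonneg hμ (by linarith [hr.2]))
        ((hy r ⟨hr.1, hr.2.trans (hst.trans htT)⟩).1)
    have hy2 : y s ≤ a t + b t * ∫ r in (0:ℝ)..s, omegaK μ (s - r) * y r := by
      have h' : b s * (∫ r in (0:ℝ)..s, omegaK μ (s - r) * y r)
          ≤ b t * ∫ r in (0:ℝ)..s, omegaK μ (s - r) * y r :=
        mul_le_mul_of_nonneg_right hbs hInn
      linarith
    have hsubIcc : Ioo (0:ℝ) s ⊆ Icc (0:ℝ) T := fun r hr =>
      ⟨hr.1.le, hr.2.le.trans (hst.trans htT)⟩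
    by_cases hint : IntegrableOn (fun r => omegaK μ (s - r) * y r) (Ioc 0 s) volume
    · have hnn : 0 ≤ᵐ[volume.restrict (Ioc 0 s)] fun r => omegaK μ (s - r) * y r := by
        refine (ae_restrict_iff' measurableSet_Ioc).2 (Filter.Eventually.of_forall fun r hr => ?_)
        exact mul_nonneg (omegaK_nonneg hμ (by linarith [hr.2]))
          ((hy r ⟨hr.1.le, hr.2.trans (hst.trans htT)⟩).1)
      have heq : ENNReal.ofReal (∫ r in (0:ℝ)..s, omegaK μ (s - r) * y r)
          = ∫⁻ r in Ioo 0 s, ENNReal.ofReal (omegaK μ (s - r)) * Y r := by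
        rw [intervalIntegral.integral_of_le hs0,
          ofReal_integral_eq_lintegral_ofReal hint hnn,
          ← Measure.restrict_congr_set Ioo_ae_eq_Ioc]
        refine lintegral_congr_ae ?_
        filter_upwards [ae_restrict_of_ae_restrict_of_subset hsubIcc hyy',
          self_mem_ae_restrict measurableSet_Ioo] with r hr hrmem
        rw [ENNReal.ofReal_mul (omegaK_nonneg hμ (by linarith [hrmem.2])), hr]
      calc ENNReal.ofReal (y s)
          ≤ ENNReal.ofReal (a t + b t * ∫ r in (0:ℝ)..s, omegaK μ (s - r) * y r) :=
            ENNReal.ofReal_le_ofReal hy2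
        _ ≤ ENNReal.ofReal (a t)
            + ENNReal.ofReal (b t * ∫ r in (0:ℝ)..s, omegaK μ (s - r) * y r) :=
            ENNReal.ofReal_add_le
        _ = ENNReal.ofReal (a t) + ENNReal.ofReal (b t)
            * ENNReal.ofReal (∫ r in (0:ℝ)..s, omegaK μ (s - r) * y r) := by
            rw [ENNReal.ofReal_mul hB]
        _ = _ := by rw [heq]
    · have hzero : (∫ r in (0:ℝ)..s, omegaK μ (s - r) * y r) = 0 := by
        rw [intervalIntegral.integral_of_le hs0]
        exact integral_undef hint
      rw [hzero, mul_zero, add_zero] at hy2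
      calc ENNReal.ofReal (y s) ≤ ENNReal.ofReal (a t) := ENNReal.ofReal_le_ofReal hy2
        _ ≤ _ := self_le_add_right _ _
  -- the iterated bound
  set P : ℕ → ℝ → ℝ≥0∞ := fun n s =>
    (∑ k ∈ Finset.range n, ENNReal.ofReal (a t * b t ^ k * omegaK ((k:ℝ) * μ + 1) s))
    + (ENNReal.ofReal (b t))^n
        * ∫⁻ r in Ioo 0 s, ENNReal.ofReal (omegaK ((n:ℝ) * μ) (s - r)) * Y r with hP
  have hAle : ∀ n : ℕ, ∀ s : ℝ, ENNReal.ofReal (a t) ≤ P (n+1) s := by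
    intro n s
    simp only [hP]
    calc ENNReal.ofReal (a t)
        = ENNReal.ofReal (a t * b t ^ (0:ℕ) * omegaK (((0:ℕ):ℝ) * μ + 1) s) := by
          norm_num [omegaK_one]
      _ ≤ ∑ k ∈ Finset.range (n+1),
            ENNReal.ofReal (a t * b t ^ k * omegaK ((k:ℝ) * μ + 1) s) :=
          Finset.single_le_sum (f := fun k : ℕ => ENNReal.ofReal
            (a t * b t ^ k * omegaK ((k:ℝ) * μ + 1) s))
            (fun k _ => zero_le) (Finset.mem_range.mpr (Nat.succ_pos n))
      _ ≤ _ := self_le_add_right _ _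
  have hind : ∀ n : ℕ, ∀ s, 0 ≤ s → s ≤ t → ENNReal.ofReal (y s) ≤ P (n+1) s := by
    intro n
    induction n with
    | zero =>
      intro s hs0 hst
      refine (hstep s hs0 hst).trans (le_of_eq ?_)
      simp only [hP, Finset.sum_range_one, pow_one, Nat.cast_one, one_mul, pow_zero,
        Nat.cast_zero, zero_mul, zero_add, omegaK_one, mul_one]
    | succ n ih =>
      intro s hs0 hst
      rcases eq_or_lt_of_le hs0 with hs0' | hspos
      · -- s = 0
        refine (hstep s hs0 hst).trans ?_
        have : Ioo (0:ℝ) s = ∅ := by rw [← hs0']; exact Ioo_self 0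
        rw [this]
        simp only [Measure.restrict_empty, lintegral_zero_measure, mul_zero, add_zero]
        exact hAle (n+1) s
      -- s > 0
      have hae : ∀ᵐ r ∂volume.restrict (Ioo 0 s), Y r ≤ P (n+1) r := by
        have hsubIcc : Ioo (0:ℝ) s ⊆ Icc (0:ℝ) T := fun r hr =>
          ⟨hr.1.le, hr.2.le.trans (hst.trans htT)⟩
        filter_upwards [ae_restrict_of_ae_restrict_of_subset hsubIcc hyy',
          self_mem_ae_restrict measurableSet_Ioo] with r hr hrmem
        show ENNReal.ofReal (y' r) ≤ P (n+1) r
        rw [← hr]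
        exact ih r hrmem.1.le (hrmem.2.le.trans hst)
      refine (hstep s hs0 hst).trans ?_
      have hmono1 : (∫⁻ r in Ioo 0 s, ENNReal.ofReal (omegaK μ (s - r)) * Y r)
          ≤ ∫⁻ r in Ioo 0 s, ENNReal.ofReal (omegaK μ (s - r)) * P (n+1) r :=
        lintegral_mono_ae (hae.mono fun r hr => mul_le_mul_right hr _)
      have hωmeas : Measurable fun r : ℝ => ENNReal.ofReal (omegaK μ (s - r)) :=
        ((measurable_omegaK μ).comp (measurable_const.sub measurable_id)).ennreal_ofReal
      have hsum_meas : ∀ k : ℕ, Measurable (fun r : ℝ => ENNReal.ofReal (omegaK μ (s - r))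
          * ENNReal.ofReal (a t * b t ^ k * omegaK ((k:ℝ) * μ + 1) r)) := fun k =>
        hωmeas.mul (((measurable_omegaK _).const_mul _).ennreal_ofReal)
      have habk : ∀ k : ℕ, 0 ≤ a t * b t ^ k := fun k => mul_nonneg hA (pow_nonneg hB k)
      have hterm : ∀ k : ℕ, (∫⁻ r in Ioo 0 s, ENNReal.ofReal (omegaK μ (s - r))
            * ENNReal.ofReal (a t * b t ^ k * omegaK ((k:ℝ) * μ + 1) r))
          = ENNReal.ofReal (a t * b t ^ k * omegaK (((k:ℝ) + 1) * μ + 1) s) := by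
        intro k
        have hν : 0 < (k:ℝ) * μ + 1 := by positivity
        have step1 : ∀ r ∈ Ioo (0:ℝ) s, ENNReal.ofReal (omegaK μ (s - r))
              * ENNReal.ofReal (a t * b t ^ k * omegaK ((k:ℝ) * μ + 1) r)
            = ENNReal.ofReal (a t * b t ^ k)
              * ENNReal.ofReal (omegaK μ (s - r) * omegaK ((k:ℝ) * μ + 1) (r - 0)) := by
          intro r hr
          rw [sub_zero, ← ENNReal.ofReal_mul (omegaK_nonneg hμ (by linarith [hr.2])),
            ← ENNReal.ofReal_mul (habk k)]
          congr 1
          ring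
        rw [setLIntegral_congr_fun measurableSet_Ioo step1,
          lintegral_const_mul' _ _ ENNReal.ofReal_ne_top,
          omega_conv_lintegral hμ hν hspos, sub_zero,
          show μ + ((k:ℝ) * μ + 1) = ((k:ℝ) + 1) * μ + 1 by ring,
          ← ENNReal.ofReal_mul (habk k), mul_assoc]
      have hν2 : (0:ℝ) < ((n+1:ℕ):ℝ) * μ := by positivity
      have hQ : (∫⁻ r in Ioo 0 s, ENNReal.ofReal (omegaK μ (s - r)) * P (n+1) r)
          = (∑ k ∈ Finset.range (n+1),
              ENNReal.ofReal (a t * b t ^ k * omegaK (((k:ℝ) + 1) * μ + 1) s))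
            + (ENNReal.ofReal (b t))^(n+1)
              * ∫⁻ r in Ioo 0 s,
                  ENNReal.ofReal (omegaK (μ + ((n+1:ℕ):ℝ) * μ) (s - r)) * Y r := by
        simp only [hP]
        have hdist : ∀ r : ℝ, ENNReal.ofReal (omegaK μ (s - r)) *
            ((∑ k ∈ Finset.range (n+1),
                ENNReal.ofReal (a t * b t ^ k * omegaK ((k:ℝ) * μ + 1) r))
              + (ENNReal.ofReal (b t))^(n+1)
                * ∫⁻ u in Ioo 0 r, ENNReal.ofReal (omegaK (((n+1:ℕ):ℝ) * μ) (r - u)) * Y u)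
            = (∑ k ∈ Finset.range (n+1), ENNReal.ofReal (omegaK μ (s - r))
                * ENNReal.ofReal (a t * b t ^ k * omegaK ((k:ℝ) * μ + 1) r))
              + (ENNReal.ofReal (b t))^(n+1) * (ENNReal.ofReal (omegaK μ (s - r))
                * ∫⁻ u in Ioo 0 r, ENNReal.ofReal (omegaK (((n+1:ℕ):ℝ) * μ) (r - u)) * Y u) := by
          intro r
          rw [mul_add, Finset.mul_sum, mul_left_comm]
        rw [lintegral_congr hdist,
          lintegral_add_left' ((Finset.measurable_sum _ fun k _ => hsum_meas k)).aemeasurable,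
          lintegral_finset_sum' _ (fun k _ => (hsum_meas k).aemeasurable),
          lintegral_const_mul' _ _ (ENNReal.pow_ne_top ENNReal.ofReal_ne_top),
          omega_semigroup hYmeas hYtop s hμ hν2]
        congr 1
        exact Finset.sum_congr rfl fun k _ => hterm k
      refine le_trans (add_le_add_right (mul_le_mul_right hmono1 _) _) (le_of_eq ?_)
      rw [hQ]
      have hexp : μ + ((n+1:ℕ):ℝ) * μ = ((n+2:ℕ):ℝ) * μ := by push_cast; ring
      rw [hexp]
      have hg0 : ENNReal.ofReal (a t * b t ^ (0:ℕ) * omegaK (((0:ℕ):ℝ) * μ + 1) s)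
          = ENNReal.ofReal (a t) := by norm_num [omegaK_one]
      have hshift : ∀ k : ℕ, ENNReal.ofReal (b t)
            * ENNReal.ofReal (a t * b t ^ k * omegaK (((k:ℝ) + 1) * μ + 1) s)
          = ENNReal.ofReal (a t * b t ^ (k+1) * omegaK (((k+1:ℕ):ℝ) * μ + 1) s) := by
        intro k
        rw [← ENNReal.ofReal_mul hB]
        congr 1
        push_cast
        ring
      simp only [hP]
      rw [mul_add, ← add_assoc, ← mul_assoc, ← pow_succ']
      congr 1
      rw [Finset.mul_sum]
      rw [Finset.sum_range_succ' (fun k => ENNReal.ofReal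
        (a t * b t ^ k * omegaK ((k:ℝ) * μ + 1) s)) (n+1)]
      rw [add_comm]
      congr 1
      · exact Finset.sum_congr rfl fun k _ => hshift k
      · exact hg0.symm
  -- final limit argument
  set z : ℝ := b t * t ^ μ with hz
  have hz0 : 0 ≤ z := mul_nonneg hB (Real.rpow_nonneg ht0 μ)
  have hsummable := ml_summable hμ hz0
  have hMLnn : 0 ≤ mittagLeffler μ z := by
    unfold mittagLeffler
    exact tsum_nonneg fun n => div_nonneg (pow_nonneg hz0 n)
      (Real.Gamma_pos_of_pos (by positivity)).le
  have hE0 : 0 ≤ a t * mittagLeffler μ z := mul_nonneg hA hMLnn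
  have hsum_le : ∀ n : ℕ, (∑ k ∈ Finset.range n,
        ENNReal.ofReal (a t * b t ^ k * omegaK ((k:ℝ) * μ + 1) t))
      ≤ ENNReal.ofReal (a t * mittagLeffler μ z) := by
    intro n
    rw [← ENNReal.ofReal_sum_of_nonneg (fun k _ => mul_nonneg
      (mul_nonneg hA (pow_nonneg hB k)) (omegaK_nonneg (by positivity) ht0))]
    refine ENNReal.ofReal_le_ofReal ?_
    have hterm_eq : ∀ k : ℕ, a t * b t ^ k * omegaK ((k:ℝ) * μ + 1) t
        = a t * (z ^ k / Real.Gamma (1 + k * μ)) := by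
      intro k
      have hω : omegaK ((k:ℝ) * μ + 1) t = t ^ ((k:ℝ) * μ) / Real.Gamma ((k:ℝ) * μ + 1) := by
        unfold omegaK
        rw [show ((k:ℝ) * μ + 1) - 1 = (k:ℝ) * μ by ring]
      have hzk : z ^ k = b t ^ k * t ^ ((k:ℝ) * μ) := by
        rw [hz, mul_pow]
        congr 1
        rw [← Real.rpow_natCast (t ^ μ) k, ← Real.rpow_mul ht0, mul_comm μ (k:ℝ)]
      rw [hω, hzk, show (1 + (k:ℝ) * μ) = (k:ℝ) * μ + 1 by ring]
      ring
    rw [Finset.sum_congr rfl (fun k _ => hterm_eq k), ← Finset.mul_sum]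
    refine mul_le_mul_of_nonneg_left ?_ hA
    unfold mittagLeffler
    exact hsummable.sum_le_tsum (Finset.range n) (fun k _ => div_nonneg (pow_nonneg hz0 k)
      (Real.Gamma_pos_of_pos (by positivity)).le)
  have hMint : IntegrableOn y' (Ioo 0 t) volume := by
    have hss : Ioo (0:ℝ) t ⊆ Icc (0:ℝ) T :=
      Ioo_subset_Icc_self.trans (Icc_subset_Icc le_rfl htT)
    have h1 : IntegrableOn y (Ioo 0 t) volume := hyint.mono_set hss
    exact h1.congr (ae_restrict_of_ae_restrict_of_subset hss hyy')
  set Mtot := ∫⁻ r in Ioo 0 t, Y r with hM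
  have hMtop : Mtot ≠ ⊤ := hMint.lintegral_lt_top.ne
  have hrem : ∀ n : ℕ, 1 ≤ ((n:ℕ):ℝ) * μ →
      ((ENNReal.ofReal (b t))^n * ∫⁻ r in Ioo 0 t,
          ENNReal.ofReal (omegaK (((n:ℕ):ℝ) * μ) (t - r)) * Y r)
        ≤ ENNReal.ofReal ((b t)^n
            * (t ^ (((n:ℕ):ℝ) * μ - 1) / Real.Gamma (((n:ℕ):ℝ) * μ))) * Mtot := by
    intro n hn
    have hΓ : 0 < Real.Gamma (((n:ℕ):ℝ) * μ) := Real.Gamma_pos_of_pos (by linarith)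
    have hb1 : (∫⁻ r in Ioo 0 t, ENNReal.ofReal (omegaK (((n:ℕ):ℝ) * μ) (t - r)) * Y r)
        ≤ ENNReal.ofReal (t ^ (((n:ℕ):ℝ) * μ - 1) / Real.Gamma (((n:ℕ):ℝ) * μ)) * Mtot := by
      rw [hM, ← lintegral_const_mul' _ _ ENNReal.ofReal_ne_top]
      refine lintegral_mono_ae ?_
      filter_upwards [self_mem_ae_restrict measurableSet_Ioo] with r hr
      refine mul_le_mul_left (ENNReal.ofReal_le_ofReal ?_) _
      unfold omegaK
      have hle : (t - r) ^ (((n:ℕ):ℝ) * μ - 1) ≤ t ^ (((n:ℕ):ℝ) * μ - 1) :=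
        Real.rpow_le_rpow (by linarith [hr.2]) (by linarith [hr.1]) (by linarith)
      gcongr
    calc (ENNReal.ofReal (b t))^n * ∫⁻ r in Ioo 0 t,
          ENNReal.ofReal (omegaK (((n:ℕ):ℝ) * μ) (t - r)) * Y r
        ≤ (ENNReal.ofReal (b t))^n
          * (ENNReal.ofReal (t ^ (((n:ℕ):ℝ) * μ - 1) / Real.Gamma (((n:ℕ):ℝ) * μ)) * Mtot) :=
          mul_le_mul_right hb1 _
      _ = _ := by
          rw [← ENNReal.ofReal_pow hB, ← mul_assoc,
            ← ENNReal.ofReal_mul (pow_nonneg hB n)]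
  obtain ⟨N, hN⟩ := exists_nat_ge (1/μ)
  have hev : ∀ᶠ n : ℕ in atTop, ENNReal.ofReal (y t)
      ≤ ENNReal.ofReal (a t * mittagLeffler μ z)
        + ENNReal.ofReal ((b t)^(n+1)
            * (t ^ (((n+1:ℕ):ℝ) * μ - 1) / Real.Gamma (((n+1:ℕ):ℝ) * μ))) * Mtot := by
    filter_upwards [eventually_ge_atTop N] with n hn
    have h1μ : 1 ≤ ((n+1:ℕ):ℝ) * μ := by
      have hNn : (N:ℝ) ≤ n := by exact_mod_cast hn
      have h2 : (1:ℝ)/μ ≤ ((n:ℝ)+1) := by linarith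
      have := mul_le_mul_of_nonneg_right h2 hμ.le
      rw [div_mul_cancel₀ _ hμ.ne'] at this
      push_cast
      linarith
    refine (hind n t ht0 le_rfl).trans ?_
    simp only [hP]
    exact add_le_add (hsum_le (n+1)) (hrem (n+1) h1μ)
  have hlim : Tendsto (fun n : ℕ => ENNReal.ofReal (a t * mittagLeffler μ z)
      + ENNReal.ofReal ((b t)^(n+1)
          * (t ^ (((n+1:ℕ):ℝ) * μ - 1) / Real.Gamma (((n+1:ℕ):ℝ) * μ))) * Mtot)
      atTop (𝓝 (ENNReal.ofReal (a t * mittagLeffler μ z))) := by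
    have h1 : Tendsto (fun n : ℕ => (b t)^(n+1)
        * (t ^ (((n+1:ℕ):ℝ) * μ - 1) / Real.Gamma (((n+1:ℕ):ℝ) * μ))) atTop (𝓝 0) := by
      have := (remainder_tendsto hμ htpos hB).comp (tendsto_add_atTop_nat 1)
      exact this.congr fun n => rfl
    have h2 := ENNReal.tendsto_ofReal h1
    rw [ENNReal.ofReal_zero] at h2
    have h3 := ENNReal.Tendsto.mul_const h2 (Or.inr hMtop)
    rw [zero_mul] at h3
    have h4 := h3.const_add (ENNReal.ofReal (a t * mittagLeffler μ z))
    rw [add_zero] at h4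
    exact h4
  have hfinal : ENNReal.ofReal (y t) ≤ ENNReal.ofReal (a t * mittagLeffler μ z) :=
    ge_of_tendsto hlim hev
  exact (ENNReal.ofReal_le_ofReal_iff hE0).mp hfinal
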